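/- arXiv:1305.2856 — 4 statements merged into one kernel-verified Lean document; each statement's English description precedes it below -/
import Mathlib

section
/- (Theorem: no left invariant non-Riemannian Berwald Randers metric on groups with perfect Lie algebra, algebraic form.) Let 𝔤 be a finite-dimensional real Lie algebra equipped with an inner product ⟨·,·⟩, and let ∇ be the Levi-Civita product of the corresponding left-invariant Riemannian metric. If 𝔤 is perfect, i.e. [𝔤,𝔤] = 𝔤, then every parallel vector X ∈ 𝔤 (meaning ∇_y X = 0 for all y ∈ 𝔤) is zero. Consequently a connected Lie group with perfect Lie algebra admits no left invariant non-Riemannian Randers metric of Berwald type arising from a left invariant Riemannian metric and a left invariant vector field. -/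
/-- If the Lie algebra is perfect (`[𝔤,𝔤] = 𝔤`, i.e. the first term of the derived series is
everything), then every vector `X` that is parallel with respect to the Levi-Civita product of
a left-invariant Riemannian metric is zero.  This is the algebraic form of the statement that
a connected Lie group with perfect Lie algebra admits no left invariant non-Riemannian Randers
metric of Berwald type arising from a left invariant Riemannian metric and a left invariant
vector field. -/
theorem parallel_vector_eq_zero_of_perfect
    {V : Type*} [LieRing V] [LieAlgebra ℝ V] [FiniteDimensional ℝ V]
    (hperfect : LieAlgebra.derivedSeries ℝ V 1 = ⊤)
    (ip : V →ₗ[ℝ] V →ₗ[ℝ] ℝ)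
    (ip_symm : ∀ x y : V, ip x y = ip y x)
    (ip_pos : ∀ x : V, x ≠ 0 → 0 < ip x x)
    (nabla : V →ₗ[ℝ] V →ₗ[ℝ] V)
    (koszul : ∀ x y z : V,
      2 * ip (nabla x y) z = ip ⁅x, y⁆ z - ip ⁅y, z⁆ x + ip ⁅z, x⁆ y)
    (X : V) (hX : ∀ y : V, nabla y X = 0) :
    X = 0 := by
  -- Key: the inner product of any bracket with X vanishes.
  have key : ∀ y z : V, ip ⁅y, z⁆ X = 0 := by
    intro y z
    have h1 := koszul y X z
    have h2 := koszul z X y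
    rw [hX y] at h1
    rw [hX z] at h2
    simp only [map_zero, LinearMap.zero_apply, mul_zero] at h1 h2
    have hs1 : ip ⁅X, z⁆ y = - ip ⁅z, X⁆ y := by
      rw [← lie_skew z X, map_neg, LinearMap.neg_apply, neg_neg]
    have hs2 : ip ⁅X, y⁆ z = - ip ⁅y, X⁆ z := by
      rw [← lie_skew y X, map_neg, LinearMap.neg_apply, neg_neg]
    have hs3 : ip ⁅y, z⁆ X = - ip ⁅z, y⁆ X := by
      rw [← lie_skew z y, map_neg, LinearMap.neg_apply, neg_neg]
    -- h1 : 0 = ip ⁅y,X⁆ z - ip ⁅X,z⁆ y + ip ⁅z,y⁆ X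
    -- h2 : 0 = ip ⁅z,X⁆ y - ip ⁅X,y⁆ z + ip ⁅y,z⁆ X
    rw [hs1] at h1
    rw [hs2] at h2
    rw [hs3] at h2 ⊢
    linarith
  -- X lies in the span of brackets, so ip X X = 0.
  have hXmem : X ∈ (LieAlgebra.derivedSeries ℝ V 1 : Submodule ℝ V) := by
    rw [hperfect]; exact Submodule.mem_top
  have hspan : (LieAlgebra.derivedSeries ℝ V 1 : Submodule ℝ V) =
      Submodule.span ℝ { m | ∃ x ∈ (⊤ : LieIdeal ℝ V), ∃ n ∈ (⊤ : LieIdeal ℝ V), ⁅x, n⁆ = m } :=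
    LieSubmodule.lieIdeal_oper_eq_linear_span' ..
  have hker : ip X X = 0 := by
    have : (LieAlgebra.derivedSeries ℝ V 1 : Submodule ℝ V) ≤
        LinearMap.ker (ip.flip X) := by
      rw [hspan, Submodule.span_le]
      rintro m ⟨x, -, n, -, rfl⟩
      simp only [SetLike.mem_coe, LinearMap.mem_ker, LinearMap.flip_apply]
      exact key x n
    have := this hXmem
    simpa [ip_symm X X] using this
  by_contra h
  exact absurd hker (ne_of_gt (ip_pos X h))
end

section
/- (Corollary for semisimple groups, algebraic form.) Let 𝔤 be a finite-dimensional semisimple real Lie algebra equipped with an inner product ⟨·,·⟩, and let ∇ be the Levi-Civita product of the corresponding left-invariant Riemannian metric. Then every parallel vector X ∈ 𝔤 (meaning ∇_y X = 0 for all y ∈ 𝔤) is zero. Consequently a semisimple connected Lie group admits no left invariant non-Riemannian Randers metric of Berwald type arising from a left invariant Riemannian metric and a left invariant vector field. -/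
/-- A semisimple Lie algebra is perfect: `⁅⊤, ⊤⁆ = ⊤`. -/
lemma semisimple_perfect_aux {R L : Type*} [CommRing R] [LieRing L] [LieAlgebra R L]
    [LieAlgebra.IsSemisimple R L] :
    (⊤ : LieIdeal R L) ≤ ⁅(⊤ : LieIdeal R L), (⊤ : LieIdeal R L)⁆ := by
  have key : sSup {I : LieIdeal R L | IsAtom I} ≤ ⁅(⊤ : LieIdeal R L), (⊤ : LieIdeal R L)⁆ := by
    apply sSup_le
    intro I hI
    have hna : ¬ IsLieAbelian I := LieAlgebra.IsSemisimple.non_abelian_of_isAtom I hI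
    have hder : LieAlgebra.derivedSeriesOfIdeal R L 1 I ≠ ⊥ := by
      intro h
      exact hna ((LieAlgebra.abelian_iff_derived_one_eq_bot I).mpr h)
    have h1 : LieAlgebra.derivedSeriesOfIdeal R L 1 I = ⁅I, I⁆ := by
      rw [LieAlgebra.derivedSeriesOfIdeal_succ, LieAlgebra.derivedSeriesOfIdeal_zero]
    have hle : ⁅I, I⁆ ≤ I := LieSubmodule.lie_le_left I I
    have hII : ⁅I, I⁆ = I := by
      rcases (hI.le_iff.mp hle) with h | h
      · exact absurd (h1.trans h) hder
      · exact h
    calc I = ⁅I, I⁆ := hII.symm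
        _ ≤ ⁅(⊤ : LieIdeal R L), (⊤ : LieIdeal R L)⁆ := LieSubmodule.mono_lie le_top le_top
  calc (⊤ : LieIdeal R L) = sSup {I : LieIdeal R L | IsAtom I} :=
        LieAlgebra.IsSemisimple.sSup_atoms_eq_top.symm
    _ ≤ _ := key

/-- If the Lie algebra is semisimple, then every vector `X` that is parallel with respect to
the Levi-Civita product of a left-invariant Riemannian metric is zero.  This is the algebraic
form of the statement that a semisimple connected Lie group admits no left invariant
non-Riemannian Randers metric of Berwald type arising from a left invariant Riemannian metric
and a left invariant vector field. -/
theorem parallel_vector_eq_zero_of_semisimple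
    {V : Type*} [LieRing V] [LieAlgebra ℝ V] [FiniteDimensional ℝ V]
    [LieAlgebra.IsSemisimple ℝ V]
    (ip : V →ₗ[ℝ] V →ₗ[ℝ] ℝ)
    (ip_symm : ∀ x y : V, ip x y = ip y x)
    (ip_pos : ∀ x : V, x ≠ 0 → 0 < ip x x)
    (nabla : V →ₗ[ℝ] V →ₗ[ℝ] V)
    (koszul : ∀ x y z : V,
      2 * ip (nabla x y) z = ip ⁅x, y⁆ z - ip ⁅y, z⁆ x + ip ⁅z, x⁆ y)
    (X : V) (hX : ∀ y : V, nabla y X = 0) :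
    X = 0 := by
  -- Step 1: Koszul with parallel X gives a relation for all y z
  have h1 : ∀ y z : V, ip ⁅y, X⁆ z - ip ⁅X, z⁆ y + ip ⁅z, y⁆ X = 0 := by
    intro y z
    have := koszul y X z
    rw [hX y] at this
    simpa using this.symm
  -- Step 2: ad X is "skew" on the diagonal
  have h2 : ∀ y : V, ip ⁅y, X⁆ y = 0 := by
    intro y
    have := h1 y y
    rw [lie_self] at this
    have hneg : ⁅X, y⁆ = -⁅y, X⁆ := (lie_skew X y).symm
    rw [hneg] at this
    simp only [map_neg, LinearMap.neg_apply, sub_neg_eq_add, map_zero, LinearMap.zero_apply] at this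
    linarith [this]
  -- Step 3: polarization
  have h3 : ∀ y z : V, ip ⁅y, X⁆ z + ip ⁅z, X⁆ y = 0 := by
    intro y z
    have := h2 (y + z)
    rw [add_lie] at this
    simp only [map_add, LinearMap.add_apply] at this
    have hy := h2 y
    have hz := h2 z
    linarith [this, hy, hz]
  -- Step 4: X is orthogonal to all brackets
  have h4 : ∀ y z : V, ip ⁅z, y⁆ X = 0 := by
    intro y z
    have ha := h1 y z
    have hb := h3 y z
    have hneg : ⁅X, z⁆ = -⁅z, X⁆ := (lie_skew X z).symm
    rw [hneg] at ha
    simp only [map_neg, LinearMap.neg_apply] at ha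
    linarith [ha, hb]
  -- Step 5: semisimple ⇒ perfect, so X ⊥ everything
  by_contra hne
  have hpos := ip_pos X hne
  have hXmem : X ∈ ⁅(⊤ : LieIdeal ℝ V), (⊤ : LieIdeal ℝ V)⁆ :=
    semisimple_perfect_aux (LieSubmodule.mem_top X)
  have hXmem' : X ∈ Submodule.span ℝ
      {m : V | ∃ (x : (⊤ : LieIdeal ℝ V)) (n : (⊤ : LieIdeal ℝ V)), ⁅(x : V), (n : V)⁆ = m} := by
    rw [← LieSubmodule.lieIdeal_oper_eq_linear_span]
    exact hXmem
  have hker : X ∈ LinearMap.ker (ip.flip X) := by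
    refine Submodule.span_le.mpr ?_ hXmem'
    rintro m ⟨x, n, rfl⟩
    simp only [SetLike.mem_coe, LinearMap.mem_ker, LinearMap.flip_apply]
    exact h4 (n : V) (x : V)
  have : ip X X = 0 := hker
  linarith
end

section
/- (The quantity θ of Theorem 2.1 vanishes, Lie group case.) Let 𝔤 be a finite-dimensional real Lie algebra with an ad-invariant inner product ⟨·,·⟩₀, let φ : 𝔤 → 𝔤 be linear, self-adjoint and positive-definite with respect to ⟨·,·⟩₀, set ⟨x,y⟩ := ⟨φx,y⟩₀, and let R be the curvature of the Levi-Civita product of ⟨·,·⟩. Then for all Y, U ∈ 𝔤: ⟨Y, R(U,Y)Y⟩ = 0. -/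
/-- **The quantity `θ` of Theorem 2.1 vanishes, Lie group case.**
With `⟨x,y⟩ = ip0 (φ x) y`, `nabla` the Levi-Civita product of `⟨·,·⟩` and
`R(x,y)z = ∇ₓ∇_y z − ∇_y ∇ₓ z − ∇_{[x,y]} z`, we have `⟨Y, R(U,Y)Y⟩ = 0`. -/
theorem theta_vanishes
    {V : Type*} [LieRing V] [LieAlgebra ℝ V] [FiniteDimensional ℝ V]
    (ip0 : V →ₗ[ℝ] V →ₗ[ℝ] ℝ)
    (ip0_symm : ∀ x y : V, ip0 x y = ip0 y x)
    (ip0_pos : ∀ x : V, x ≠ 0 → 0 < ip0 x x)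
    (ip0_ad : ∀ x y z : V, ip0 ⁅x, y⁆ z = - ip0 y ⁅x, z⁆)
    (φ : V →ₗ[ℝ] V)
    (φ_sa : ∀ x y : V, ip0 (φ x) y = ip0 x (φ y))
    (φ_pos : ∀ x : V, x ≠ 0 → 0 < ip0 (φ x) x)
    (nabla : V →ₗ[ℝ] V →ₗ[ℝ] V)
    (koszul : ∀ x y z : V,
      2 * ip0 (φ (nabla x y)) z
        = ip0 (φ ⁅x, y⁆) z - ip0 (φ ⁅y, z⁆) x + ip0 (φ ⁅z, x⁆) y)
    (Y U : V) :
    ip0 (φ Y) (nabla U (nabla Y Y) - nabla Y (nabla U Y) - nabla ⁅U, Y⁆ Y) = 0 := by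

  have gsymm : ∀ x y : V, ip0 (φ x) y = ip0 (φ y) x := by
    intro x y; rw [φ_sa, ip0_symm]
  have skew : ∀ x y z : V, ip0 (φ (nabla x y)) z = - ip0 (φ (nabla x z)) y := by
    intro x y z
    have h1 := koszul x y z
    have h2 := koszul x z y
    have e1 : ip0 (φ ⁅y, x⁆) z = - ip0 (φ ⁅x, y⁆) z := by
      rw [← lie_skew x y]; simp only [map_neg, LinearMap.neg_apply, neg_neg]
    have e2 : ip0 (φ ⁅z, y⁆) x = - ip0 (φ ⁅y, z⁆) x := by
      rw [← lie_skew y z]; simp only [map_neg, LinearMap.neg_apply, neg_neg]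
    have e3 : ip0 (φ ⁅x, z⁆) y = - ip0 (φ ⁅z, x⁆) y := by
      rw [← lie_skew z x]; simp only [map_neg, LinearMap.neg_apply, neg_neg]
    linarith
  have t1 : ip0 (φ Y) (nabla U (nabla Y Y)) = - ip0 (φ (nabla U Y)) (nabla Y Y) := by
    rw [gsymm, skew]
  have t2 : ip0 (φ Y) (nabla Y (nabla U Y)) = - ip0 (φ (nabla Y Y)) (nabla U Y) := by
    rw [gsymm, skew]
  have t3 : ip0 (φ Y) (nabla ⁅U, Y⁆ Y) = 0 := by
    have := skew ⁅U, Y⁆ Y Y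
    have hs := gsymm Y (nabla ⁅U, Y⁆ Y)
    linarith
  have hsym : ip0 (φ (nabla U Y)) (nabla Y Y) = ip0 (φ (nabla Y Y)) (nabla U Y) := gsymm _ _
  simp only [map_sub]
  linarith
end

section
/- (Numerator of the flag curvature in Theorem 2.2, bi-invariant case.) Let 𝔤 be a finite-dimensional real Lie algebra with an ad-invariant inner product ⟨·,·⟩₀, let X ∈ 𝔤 satisfy ⟨X,X⟩₀ < 1, let F(Z) = √⟨Z,Z⟩₀ + ⟨X,Z⟩₀ be the associated Randers norm with fundamental tensor g_Y, and let R be the curvature of the Levi-Civita product of ⟨·,·⟩₀, so that R(U,Y)Y = (1/4)[Y,[U,Y]]. Then for every pair Y, U ∈ 𝔤 orthonormal with respect to ⟨·,·⟩₀: g_Y(R(U,Y)Y, U) = (1/4)(⟨[Y,[U,Y]], X⟩₀·⟨X,U⟩₀ + ⟨[Y,[U,Y]], U⟩₀·(1 + ⟨X,Y⟩₀)). -/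
/-- **Numerator of the flag curvature in Theorem 2.2, bi-invariant case.**
`ip0` is an ad-invariant inner product on the Lie algebra, `X` satisfies `⟨X,X⟩₀ < 1`,
`F(Z) = √⟨Z,Z⟩₀ + ⟨X,Z⟩₀` is the Randers norm with fundamental tensor
`g_Y(A,B) = (1/2) ∂²/∂s∂t [F(Y+sA+tB)²]|_{s=t=0}`, and `R` is the curvature of the
Levi-Civita product `nabla` of `⟨·,·⟩₀`.  For `Y, U` orthonormal with respect to `⟨·,·⟩₀`,
`g_Y(R(U,Y)Y, U) = (1/4)(⟨[Y,[U,Y]],X⟩₀⟨X,U⟩₀ + ⟨[Y,[U,Y]],U⟩₀(1+⟨X,Y⟩₀))`. -/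
theorem flag_curvature_numerator_biinvariant
    {V : Type*} [LieRing V] [LieAlgebra ℝ V] [FiniteDimensional ℝ V]
    (ip0 : V →ₗ[ℝ] V →ₗ[ℝ] ℝ)
    (ip0_symm : ∀ x y : V, ip0 x y = ip0 y x)
    (ip0_pos : ∀ x : V, x ≠ 0 → 0 < ip0 x x)
    (ip0_ad : ∀ x y z : V, ip0 ⁅x, y⁆ z = - ip0 y ⁅x, z⁆)
    (X : V) (hX : ip0 X X < 1)
    (F : V → ℝ) (hF : ∀ Z : V, F Z = Real.sqrt (ip0 Z Z) + ip0 X Z)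
    (nabla : V →ₗ[ℝ] V →ₗ[ℝ] V)
    (koszul : ∀ x y z : V,
      2 * ip0 (nabla x y) z = ip0 ⁅x, y⁆ z - ip0 ⁅y, z⁆ x + ip0 ⁅z, x⁆ y)
    (Y U : V) (hYY : ip0 Y Y = 1) (hUU : ip0 U U = 1) (hYU : ip0 Y U = 0) :
    (1 / 2) * deriv (fun s : ℝ => deriv (fun t : ℝ =>
        (F (Y + s • (nabla U (nabla Y Y) - nabla Y (nabla U Y) - nabla ⁅U, Y⁆ Y)
          + t • U)) ^ 2) 0) 0
      = (1 / 4) * (ip0 ⁅Y, ⁅U, Y⁆⁆ X * ip0 X U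
          + ip0 ⁅Y, ⁅U, Y⁆⁆ U * (1 + ip0 X Y)) := by
  -- nondegeneracy
  have nondeg : ∀ v : V, (∀ z : V, ip0 v z = 0) → v = 0 := by
    intro v hv
    by_contra h
    exact absurd (hv v) (ne_of_gt (ip0_pos v h))
  -- nabla is half the bracket
  have hnab : ∀ x y : V, nabla x y = (1/2 : ℝ) • ⁅x, y⁆ := by
    intro x y
    have key : ∀ z : V, ip0 (nabla x y) z = (1/2) * ip0 ⁅x, y⁆ z := by
      intro z
      have hk := koszul x y z
      have h1 : ip0 ⁅y, z⁆ x = ip0 ⁅x, y⁆ z := by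
        rw [ip0_ad, ← lie_skew x y, map_neg, LinearMap.neg_apply, neg_inj]
        exact ip0_symm z ⁅y, x⁆
      have h2 : ip0 ⁅z, x⁆ y = ip0 ⁅x, y⁆ z := by
        have hzx : ⁅z, x⁆ = -⁅x, z⁆ := neg_eq_iff_eq_neg.mp (lie_skew x z)
        rw [hzx, map_neg, LinearMap.neg_apply, ip0_ad, neg_neg]
        exact ip0_symm z ⁅x, y⁆
      linarith
    have hz : nabla x y - (1/2 : ℝ) • ⁅x, y⁆ = 0 := by
      apply nondeg
      intro z
      have := key z
      simp only [map_sub, map_smul, LinearMap.sub_apply, LinearMap.smul_apply,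
        smul_eq_mul]
      linarith
    exact sub_eq_zero.mp hz
  -- the curvature vector
  set B : V := ⁅Y, ⁅U, Y⁆⁆ with hBdef
  have hw : nabla U (nabla Y Y) - nabla Y (nabla U Y) - nabla ⁅U, Y⁆ Y
      = (1/4 : ℝ) • B := by
    rw [hnab Y Y, hnab U Y]
    rw [hnab U ((1/2 : ℝ) • ⁅Y, Y⁆), hnab Y ((1/2 : ℝ) • ⁅U, Y⁆), hnab ⁅U, Y⁆ Y]
    have hsk : ⁅⁅U, Y⁆, Y⁆ = -B := by
      rw [hBdef]
      exact neg_eq_iff_eq_neg.mp (lie_skew Y ⁅U, Y⁆)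
    have hB2 : ⁅Y, (1/2 : ℝ) • ⁅U, Y⁆⁆ = (1/2 : ℝ) • B := by
      rw [lie_smul, hBdef]
    rw [hsk, hB2]
    simp only [lie_self, smul_zero, lie_zero]
    module
  rw [hw]
  set w : V := (1/4 : ℝ) • B with hwdef
  -- scalar abbreviations
  set c : ℝ := ip0 w w with hc
  set bW : ℝ := ip0 w U with hbW
  set pY : ℝ := ip0 X Y with hpY
  set pW : ℝ := ip0 X w with hpW
  set e : ℝ := ip0 X U with he
  have hBY : ip0 B Y = 0 := by
    rw [hBdef, ip0_ad]; simp
  have hwY : ip0 w Y = 0 := by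
    rw [hwdef, map_smul, LinearMap.smul_apply, hBY, smul_zero]
  have hYw : ip0 Y w = 0 := by rw [ip0_symm]; exact hwY
  have hUw : ip0 U w = bW := by rw [ip0_symm]
  have hUY : ip0 U Y = 0 := by rw [ip0_symm]; exact hYU
  have hcnn : 0 ≤ c := by
    rcases eq_or_ne w 0 with h | h
    · simp [hc, h]
    · exact (ip0_pos w h).le
  -- bilinear expansions
  have hq : ∀ s t : ℝ, ip0 (Y + s • w + t • U) (Y + s • w + t • U)
      = 1 + c * s ^ 2 + 2 * (bW * s) * t + t ^ 2 := by
    intro s t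
    simp only [map_add, map_smul, LinearMap.add_apply, LinearMap.smul_apply,
      smul_eq_mul, hYY, hUU, hYU, hYw, hwY, hUw, hUY, ← hc, ← hbW]
    ring
  have hp : ∀ s t : ℝ, ip0 X (Y + s • w + t • U) = pY + pW * s + e * t := by
    intro s t
    simp only [map_add, map_smul, smul_eq_mul, ← hpY, ← hpW, ← he]
    ring
  -- inner derivative
  have hinner : ∀ s : ℝ, deriv (fun t : ℝ => (F (Y + s • w + t • U)) ^ 2) 0
      = 2 * (Real.sqrt (1 + c * s ^ 2) + (pY + pW * s))
        * ((bW * s) / Real.sqrt (1 + c * s ^ 2) + e) := by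
    intro s
    have ha : (0 : ℝ) < 1 + c * s ^ 2 := by positivity
    set A : ℝ := 1 + c * s ^ 2 with hA
    have hfun : (fun t : ℝ => (F (Y + s • w + t • U)) ^ 2)
        = fun t : ℝ => (Real.sqrt (A + 2 * (bW * s) * t + t ^ 2)
            + (pY + pW * s + e * t)) ^ 2 := by
      funext t
      rw [hF, hq, hp]
    have hq' : HasDerivAt (fun t : ℝ => A + 2 * (bW * s) * t + t ^ 2)
        (2 * (bW * s)) 0 := by
      have h1 := (((hasDerivAt_id (0:ℝ)).const_mul (2 * (bW * s))).const_add A).add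
        (hasDerivAt_pow 2 (0:ℝ))
      simpa [Pi.add_def] using h1
    have hA0 : (fun t : ℝ => A + 2 * (bW * s) * t + t ^ 2) 0 = A := by
      norm_num
    have hsq1 : HasDerivAt Real.sqrt (1 / (2 * Real.sqrt A))
        ((fun t : ℝ => A + 2 * (bW * s) * t + t ^ 2) 0) := by
      rw [hA0]; exact Real.hasDerivAt_sqrt ha.ne'
    have hsq : HasDerivAt (fun t : ℝ => Real.sqrt (A + 2 * (bW * s) * t + t ^ 2))
        (1 / (2 * Real.sqrt A) * (2 * (bW * s))) 0 := hsq1.comp 0 hq'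
    have hlin : HasDerivAt (fun t : ℝ => pY + pW * s + e * t) e 0 := by
      simpa using ((hasDerivAt_id (0:ℝ)).const_mul e).const_add (pY + pW * s)
    have hD := ((hsq.add hlin).pow 2).deriv
    simp only [Pi.add_def, Pi.pow_def] at hD
    rw [hfun, hD]
    have hsA : Real.sqrt A ≠ 0 := (Real.sqrt_pos.mpr ha).ne'
    simp only [mul_zero, add_zero, zero_pow, pow_one, Nat.cast_ofNat]
    push_cast
    field_simp
    ring
  have houter : (fun s : ℝ => deriv (fun t : ℝ => (F (Y + s • w + t • U)) ^ 2) 0)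
      = fun s : ℝ => 2 * (Real.sqrt (1 + c * s ^ 2) + (pY + pW * s))
          * ((bW * s) / Real.sqrt (1 + c * s ^ 2) + e) := funext hinner
  rw [houter]
  -- outer derivative
  have h01 : (1 : ℝ) + c * 0 ^ 2 = 1 := by ring
  have hq2 : HasDerivAt (fun s : ℝ => 1 + c * s ^ 2) 0 0 := by
    have := ((hasDerivAt_pow 2 (0:ℝ)).const_mul c).const_add 1
    simpa using this
  have hsq2' : HasDerivAt Real.sqrt (1 / (2 * Real.sqrt 1))
      ((fun s : ℝ => 1 + c * s ^ 2) 0) := by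
    simp only [h01]
    exact Real.hasDerivAt_sqrt one_ne_zero
  have hsq2 : HasDerivAt (fun s : ℝ => Real.sqrt (1 + c * s ^ 2)) 0 0 := by
    have := hsq2'.comp 0 hq2
    simpa [Function.comp_def] using this
  have hf1 : HasDerivAt (fun s : ℝ => Real.sqrt (1 + c * s ^ 2) + (pY + pW * s))
      pW 0 := by
    have hlin2 : HasDerivAt (fun s : ℝ => pY + pW * s) pW 0 := by
      simpa using ((hasDerivAt_id (0:ℝ)).const_mul pW).const_add pY
    simpa [Pi.add_def] using hsq2.add hlin2
  have hden0 : (fun s : ℝ => Real.sqrt (1 + c * s ^ 2)) 0 ≠ 0 := by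
    simp only [h01, Real.sqrt_one]
    exact one_ne_zero
  have hnum : HasDerivAt (fun s : ℝ => bW * s) bW 0 := by
    simpa using (hasDerivAt_id (0:ℝ)).const_mul bW
  have hf2 : HasDerivAt (fun s : ℝ => (bW * s) / Real.sqrt (1 + c * s ^ 2) + e)
      bW 0 := by
    have := (hnum.div hsq2 hden0).add_const e
    simp only [h01, Real.sqrt_one, mul_zero, mul_one, zero_mul, sub_zero,
      one_pow, div_one] at this
    exact this
  have hg : HasDerivAt (fun s : ℝ => 2 * (Real.sqrt (1 + c * s ^ 2) + (pY + pW * s))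
      * ((bW * s) / Real.sqrt (1 + c * s ^ 2) + e))
      (2 * pW * e + 2 * (1 + pY) * bW) 0 := by
    have := (hf1.const_mul 2).mul hf2
    simp only [h01, Real.sqrt_one, mul_zero, zero_div, zero_add, add_zero] at this
    exact this
  rw [hg.deriv]
  -- final scalar computation
  have hpWv : pW = (1/4) * ip0 ⁅Y, ⁅U, Y⁆⁆ X := by
    rw [hpW, hwdef, map_smul, smul_eq_mul, ip0_symm, hBdef]
  have hbWv : bW = (1/4) * ip0 ⁅Y, ⁅U, Y⁆⁆ U := by
    rw [hbW, hwdef, map_smul, LinearMap.smul_apply, smul_eq_mul, hBdef]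
  rw [hpWv, hbWv]
  ring
end
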